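/- In the 'YES'-instance direction of the APX-hardness reduction: if q sets of size d cover a universe of qd elements, then in the constructed auditing instance (with R = d, deviating committee = the q corresponding main candidates, satisfying all (1 + 1/e)qd non-dummy voters) the core approximation value satisfies θ_c ≤ 1/(1 + 1/e). -/
import Mathlib


attribute [local instance] Classical.propDecidable

/-- Approval sets of the APX-hardness instance.  Candidates are `ξ` main candidates
(`Sum.inl`) — one per set of the covering instance — plus `q-1` disjoint dummy candidates
per first-group voter (`Sum.inr`).  A first-group voter `Sum.inl i` approves her own
`q-1` dummies and all main candidates; a second-group voter `Sum.inr e` (one per element)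
approves the main candidates whose set contains `e`. -/
noncomputable def covA (q d a ξ : ℕ) (F : Fin ξ → Finset (Fin (q * d))) :
    (Fin a ⊕ Fin (q * d)) → Finset (Fin ξ ⊕ (Fin a × Fin (q - 1)))
  | Sum.inl i => Finset.univ.filter (fun c => match c with
      | Sum.inl _ => True
      | Sum.inr (i', _) => i' = i)
  | Sum.inr e => Finset.univ.filter (fun c => match c with
      | Sum.inl s => e ∈ F s
      | Sum.inr _ => False)

/-- The audited committee `W`: all dummy candidates. -/
noncomputable def covW (q d a ξ : ℕ) : Finset (Fin ξ ⊕ (Fin a × Fin (q - 1))) :=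
  Finset.univ.filter (fun c => match c with
    | Sum.inr _ => True
    | _ => False)

/-- 'YES'-instance direction of the APX-hardness reduction: if `q` sets of size `d`
cover a universe of `qd` elements, then in the constructed auditing instance (with
`R = d`, first group of `a ≥ qd/e` voters) deviating to the `q` covering main candidates
satisfies all non-dummy voters, so `θ_c ≤ R·|T|/|S| ≤ 1/(1 + 1/e)`. -/
theorem yes_instance_theta_c_bound
    (q d a ξ : ℕ) (hq : 2 ≤ q) (hd : 1 ≤ d) (ha : 1 ≤ a)
    (F : Fin ξ → Finset (Fin (q * d))) (hFd : ∀ s, (F s).card = d)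
    (Q : Finset (Fin ξ)) (hQcard : Q.card = q)
    (hcover : ∀ e : Fin (q * d), ∃ s ∈ Q, e ∈ F s)
    (hae : (q * d : ℝ) / Real.exp 1 ≤ (a : ℝ)) :
    ∃ (S : Finset (Fin a ⊕ Fin (q * d)))
      (T : Finset (Fin ξ ⊕ (Fin a × Fin (q - 1)))),
      S.Nonempty ∧
      (∀ i ∈ S, (covW q d a ξ ∩ covA q d a ξ F i).card < (T ∩ covA q d a ξ F i).card) ∧
      (d : ℝ) * (T.card : ℝ) / (S.card : ℝ) ≤ 1 / (1 + 1 / Real.exp 1) := by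

  classical
  have hne : Nonempty (Fin a ⊕ Fin (q * d)) := ⟨Sum.inl ⟨0, ha⟩⟩
  refine ⟨Finset.univ, Q.image Sum.inl, Finset.univ_nonempty, ?_, ?_⟩
  · rintro (i | e) _
    · have hT : (Q.image Sum.inl ∩ covA q d a ξ F (Sum.inl i)) = Q.image Sum.inl := by
        apply Finset.inter_eq_left.mpr
        intro c hc
        simp only [Finset.mem_image] at hc
        obtain ⟨s, _, rfl⟩ := hc
        simp [covA]
      have hW : (covW q d a ξ ∩ covA q d a ξ F (Sum.inl i)).card ≤ q - 1 := by
        have hsub : (covW q d a ξ ∩ covA q d a ξ F (Sum.inl i)) ⊆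
            (Finset.univ.image fun j : Fin (q - 1) =>
              (Sum.inr (i, j) : Fin ξ ⊕ (Fin a × Fin (q - 1)))) := by
          rintro (s | ⟨i', j⟩) hc
          · simp [covW] at hc
          · simp only [Finset.mem_inter, covW, covA, Finset.mem_filter, Finset.mem_univ,
              true_and] at hc
            subst hc
            simp
        calc (covW q d a ξ ∩ covA q d a ξ F (Sum.inl i)).card
            ≤ _ := Finset.card_le_card hsub
          _ ≤ (Finset.univ : Finset (Fin (q - 1))).card := Finset.card_image_le
          _ = q - 1 := by simp
      rw [hT, Finset.card_image_of_injective _ Sum.inl_injective, hQcard]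
      omega
    · have hW : (covW q d a ξ ∩ covA q d a ξ F (Sum.inr e)) = ∅ := by
        ext c
        rcases c with s | p
        · simp [covW]
        · simp [covW, covA]
      obtain ⟨s, hsQ, hse⟩ := hcover e
      have hmem : Sum.inl s ∈ Q.image Sum.inl ∩ covA q d a ξ F (Sum.inr e) := by
        simp [covA, hse, hsQ]
      rw [hW]
      simpa using Finset.card_pos.mpr ⟨_, hmem⟩
  · have hTcard : ((Q.image Sum.inl : Finset (Fin ξ ⊕ (Fin a × Fin (q - 1))))).card = q :=
      (Finset.card_image_of_injective Q
        (Sum.inl_injective (α := Fin ξ) (β := Fin a × Fin (q - 1)))).trans hQcard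
    have hScard : (Finset.univ : Finset (Fin a ⊕ Fin (q * d))).card = a + q * d := by
      simp
    rw [hTcard, hScard]
    have hE : (0:ℝ) < Real.exp 1 := Real.exp_pos 1
    have hqd : (0:ℝ) < (q : ℝ) * d := by positivity
    have hden : (0:ℝ) < ((a + q * d : ℕ) : ℝ) := by
      have : 0 < a + q * d := by positivity
      exact_mod_cast this
    have hpos2 : (0:ℝ) < 1 + 1 / Real.exp 1 := by positivity
    rw [div_le_div_iff₀ hden hpos2]
    push_cast
    have h1 : (q : ℝ) * d / Real.exp 1 ≤ a := hae
    rw [div_le_iff₀ hE] at h1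
    have h3 : (d : ℝ) * q * (1 / Real.exp 1) ≤ a := by
      rw [mul_one_div, div_le_iff₀ hE]
      nlinarith [h1]
    nlinarith [h3]
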